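/- arXiv:1712.09102 — 6 statements merged into one kernel-verified Lean document; each statement's English description precedes it below -/
import Mathlib

section
/- Let R be a (possibly noncommutative) division ring, let A_f ∈ R^{n_f×n_f} and A_g ∈ R^{n_g×n_g} be invertible, let u_f ∈ R^{1×n_f}, v_f ∈ R^{n_f×1}, u_g ∈ R^{1×n_g}, v_g ∈ R^{n_g×1}, and set f = u_f A_f⁻¹ v_f and g = u_g A_g⁻¹ v_g. Then the block matrix A = [[A_f, -v_f u_g],[0, A_g]] is invertible and [u_f, 0] A⁻¹ [0; v_g] = f·g. -/
/-- Product construction for linear representations over a division ring: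
if `f = u_f A_f⁻¹ v_f` and `g = u_g A_g⁻¹ v_g`, then the block matrix
`A = [[A_f, -v_f u_g],[0, A_g]]` is invertible and
`[u_f, 0] A⁻¹ [0; v_g] = f * g`. -/
theorem stmt0 {D : Type*} [DivisionRing D] {nf ng : ℕ}
    (Af : Matrix (Fin nf) (Fin nf) D) (Ag : Matrix (Fin ng) (Fin ng) D)
    (Bf : Matrix (Fin nf) (Fin nf) D) (Bg : Matrix (Fin ng) (Fin ng) D)
    (hBf : Af * Bf = 1 ∧ Bf * Af = 1) (hBg : Ag * Bg = 1 ∧ Bg * Ag = 1)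
    (uf : Matrix (Fin 1) (Fin nf) D) (vf : Matrix (Fin nf) (Fin 1) D)
    (ug : Matrix (Fin 1) (Fin ng) D) (vg : Matrix (Fin ng) (Fin 1) D)
    (u' : Matrix (Fin 1) (Fin nf ⊕ Fin ng) D)
    (v' : Matrix (Fin nf ⊕ Fin ng) (Fin 1) D)
    (hu' : u' = Matrix.of fun (i : Fin 1) => Sum.elim (uf i) (fun _ => (0 : D)))
    (hv' : v' = Matrix.of (Sum.elim (fun (_ : Fin nf) (_ : Fin 1) => (0 : D)) (fun i => vg i)))
    (f g : D) (hf : f = (uf * Bf * vf) 0 0) (hg : g = (ug * Bg * vg) 0 0) :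
    ∃ B : Matrix (Fin nf ⊕ Fin ng) (Fin nf ⊕ Fin ng) D,
      Matrix.fromBlocks Af (-(vf * ug)) 0 Ag * B = 1 ∧
      B * Matrix.fromBlocks Af (-(vf * ug)) 0 Ag = 1 ∧
      (u' * B * v') 0 0 = f * g := by
  obtain ⟨hf1, hf2⟩ := hBf
  obtain ⟨hg1, hg2⟩ := hBg
  refine ⟨Matrix.fromBlocks Bf (Bf * vf * ug * Bg) 0 Bg, ?_, ?_, ?_⟩
  · have h2 : Af * (Bf * vf * ug * Bg) + -(vf * ug) * Bg = 0 := by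
      rw [show Af * (Bf * vf * ug * Bg) = (Af * Bf) * (vf * ug * Bg) by
        simp [Matrix.mul_assoc], hf1, Matrix.one_mul]
      rw [Matrix.neg_mul, Matrix.mul_assoc, add_neg_cancel]
    rw [Matrix.fromBlocks_multiply, hf1, hg1, Matrix.mul_zero, Matrix.zero_mul,
      Matrix.zero_mul, Matrix.mul_zero, add_zero, zero_add, h2,
      ← Matrix.fromBlocks_one]
    simp
  · have h2 : Bf * -(vf * ug) + Bf * vf * ug * Bg * Ag = 0 := by
      rw [show Bf * vf * ug * Bg * Ag = Bf * (vf * ug) * (Bg * Ag) by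
        simp [Matrix.mul_assoc], hg2, Matrix.mul_one]
      rw [Matrix.mul_neg, ← Matrix.mul_assoc, neg_add_cancel]
    rw [Matrix.fromBlocks_multiply, hf2, hg2, Matrix.mul_zero, Matrix.zero_mul,
      Matrix.zero_mul, Matrix.mul_zero, add_zero, zero_add, h2,
      ← Matrix.fromBlocks_one]
    simp
  · have key : u' * Matrix.fromBlocks Bf (Bf * vf * ug * Bg) 0 Bg * v'
        = uf * (Bf * vf * ug * Bg) * vg := by
      subst hu' hv'
      ext i j
      simp [Matrix.mul_apply, Fintype.sum_sum_type, Finset.mul_sum, Finset.sum_mul,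
        mul_assoc]
    rw [key, hf, hg]
    have : uf * (Bf * vf * ug * Bg) * vg = (uf * Bf * vf) * (ug * Bg * vg) := by
      simp [Matrix.mul_assoc]
    rw [this, Matrix.mul_apply, Fin.sum_univ_one]
end

section
/- Let R be a division ring, A ∈ R^{n×n} invertible, u ∈ R^{1×n}, v ∈ R^{n×1}, and suppose f = u A⁻¹ v is nonzero. Then the (n+1)×(n+1) block matrix B = [[-v, A],[0, u]] is invertible and e_1 B⁻¹ e_{n+1} = f⁻¹, where e_1 is the first standard basis row vector and e_{n+1} is the last standard basis column vector. -/
/-- Inverse construction for linear representations over a division ring: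
if `f = u A⁻¹ v ≠ 0`, then `B = [[-v, A],[0, u]]` is invertible and
`e_1 B⁻¹ e_{n+1} = f⁻¹`. -/
theorem stmt2 {D : Type*} [DivisionRing D] {n : ℕ}
    (A A' : Matrix (Fin n) (Fin n) D)
    (hA : A * A' = 1 ∧ A' * A = 1)
    (u : Matrix (Fin 1) (Fin n) D) (v : Matrix (Fin n) (Fin 1) D)
    (f : D) (hf : f = (u * A' * v) 0 0) (hf0 : f ≠ 0) :
    ∃ C : Matrix (Fin 1 ⊕ Fin n) (Fin n ⊕ Fin 1) D,
      Matrix.fromBlocks (-v) A 0 u * C = 1 ∧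
      C * Matrix.fromBlocks (-v) A 0 u = 1 ∧
      C (Sum.inl 0) (Sum.inr 0) = f⁻¹ := by
  obtain ⟨hA1, hA2⟩ := hA
  have hfv : u * A' * v = f • (1 : Matrix (Fin 1) (Fin 1) D) := by
    ext i j
    fin_cases i; fin_cases j
    simp [hf]
  set g := f⁻¹ with hg
  have hfg : f * g = 1 := mul_inv_cancel₀ hf0
  have hgf : g * f = 1 := inv_mul_cancel₀ hf0
  have hAA' : ∀ {p : Type} (X : Matrix (Fin n) p D), A * (A' * X) = X := by
    intro p X; rw [← Matrix.mul_assoc, hA1, Matrix.one_mul]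
  set e : Matrix (Fin 1) (Fin 1) D := g • (1 : Matrix (Fin 1) (Fin 1) D) with he
  refine ⟨Matrix.fromBlocks (-(g • (u * A'))) e
      (A' - A' * v * (g • (u * A'))) (A' * v * e), ?_, ?_, ?_⟩
  · rw [Matrix.fromBlocks_multiply]
    have tl : (-v) * (-(g • (u * A'))) + A * (A' - A' * v * (g • (u * A'))) = 1 := by
      rw [Matrix.neg_mul, Matrix.mul_neg, neg_neg, Matrix.mul_sub,
        Matrix.mul_assoc A' v, hAA', hA1]
      abel
    have tr : (-v) * e + A * (A' * v * e) = 0 := by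
      rw [Matrix.neg_mul, Matrix.mul_assoc A' v, hAA']
      exact neg_add_cancel _
    have bl : (0 : Matrix (Fin 1) (Fin 1) D) * (-(g • (u * A'))) +
        u * (A' - A' * v * (g • (u * A'))) = 0 := by
      rw [Matrix.zero_mul, zero_add, Matrix.mul_sub, ← Matrix.mul_assoc u,
        ← Matrix.mul_assoc u A' v, hfv, Matrix.smul_mul, Matrix.one_mul,
        smul_smul, hfg, one_smul, sub_self]
    have br : (0 : Matrix (Fin 1) (Fin 1) D) * e + u * (A' * v * e) = 1 := by
      rw [Matrix.zero_mul, zero_add, ← Matrix.mul_assoc u,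
        ← Matrix.mul_assoc u A' v, hfv, he, Matrix.smul_mul, Matrix.one_mul,
        smul_smul, hfg, one_smul]
    rw [tl, tr, bl, br, Matrix.fromBlocks_one]
  · rw [Matrix.fromBlocks_multiply]
    have tl : (-(g • (u * A'))) * (-v) + e * (0 : Matrix (Fin 1) (Fin 1) D) = 1 := by
      rw [Matrix.mul_zero, add_zero, Matrix.neg_mul, Matrix.mul_neg, neg_neg,
        Matrix.smul_mul, hfv, smul_smul, hgf, one_smul]
    have tr : (-(g • (u * A'))) * A + e * u = 0 := by
      rw [Matrix.neg_mul, Matrix.smul_mul, he, Matrix.smul_mul, Matrix.one_mul,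
        Matrix.mul_assoc, hA2, Matrix.mul_one]
      exact neg_add_cancel _
    have bl : (A' - A' * v * (g • (u * A'))) * (-v) +
        (A' * v * e) * (0 : Matrix (Fin 1) (Fin 1) D) = 0 := by
      rw [Matrix.mul_zero, add_zero, Matrix.mul_neg, Matrix.sub_mul,
        Matrix.mul_assoc (A' * v), Matrix.smul_mul, hfv, smul_smul, hgf, one_smul,
        Matrix.mul_one, sub_self, neg_zero]
    have br : (A' - A' * v * (g • (u * A'))) * A + (A' * v * e) * u = 1 := by
      rw [Matrix.sub_mul, Matrix.mul_assoc (A' * v), Matrix.smul_mul,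
        Matrix.mul_assoc u, hA2, Matrix.mul_one, Matrix.mul_assoc (A' * v), he,
        Matrix.smul_mul, Matrix.one_mul]
      abel
    rw [tl, tr, bl, br, Matrix.fromBlocks_one]
  · simp [Matrix.fromBlocks, he]
end

section
/- Let K be a field and let A be an n×n matrix over a (not necessarily commutative) K-algebra. If A is hollow, i.e., contains a k×l block of zeros with k + l > n (after suitable row and column selection), then A is not full: A factors as A = T·U with T of size n×m and U of size m×n for some m < n. -/
/-- A hollow square matrix over a (not necessarily commutative) `K`-algebra is not full:
if `A` has a `k × l` zero submatrix with `k + l > n`, then `A = T * U` with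
`T : n × m`, `U : m × n` for some `m < n`. -/
theorem stmt3 {K R : Type*} [Field K] [Ring R] [Algebra K R] {n : ℕ}
    (A : Matrix (Fin n) (Fin n) R)
    (I J : Finset (Fin n)) (hcard : n < I.card + J.card)
    (hzero : ∀ i ∈ I, ∀ j ∈ J, A i j = 0) :
    ∃ m : ℕ, m < n ∧ ∃ (T : Matrix (Fin n) (Fin m) R) (U : Matrix (Fin m) (Fin n) R),
      A = T * U := by
  classical
  set ι := (↥(Iᶜ) ⊕ ↥(Jᶜ)) with hι
  have hcI : Fintype.card ↥(Iᶜ) = n - I.card := by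
    simp [Finset.card_compl]
  have hcJ : Fintype.card ↥(Jᶜ) = n - J.card := by
    simp [Finset.card_compl]
  have hI : I.card ≤ n := by
    simpa using Finset.card_le_univ I
  have hJ : J.card ≤ n := by
    simpa using Finset.card_le_univ J
  refine ⟨Fintype.card ι, ?_, ?_⟩
  · simp only [hι, Fintype.card_sum, hcI, hcJ]
    omega
  · set T : Matrix (Fin n) ι R :=
      fun i a => Sum.elim (fun α : ↥(Iᶜ) => if i = ↑α then 1 else 0)
        (fun β : ↥(Jᶜ) => A i ↑β) a with hT
    set U : Matrix ι (Fin n) R :=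
      fun a j => Sum.elim (fun α : ↥(Iᶜ) => if j ∈ J then A ↑α j else 0)
        (fun β : ↥(Jᶜ) => if j = ↑β then 1 else 0) a with hU
    set e := (Fintype.equivFin ι)
    refine ⟨fun i a => T i (e.symm a), fun a j => U (e.symm a) j, ?_⟩
    ext i j
    change A i j = ∑ x : Fin (Fintype.card ι), T i (e.symm x) * U (e.symm x) j
    rw [Equiv.sum_comp e.symm (fun x => T i x * U x j)]
    rw [Fintype.sum_sum_type]
    have h1 : (∑ α : ↥(Iᶜ), T i (Sum.inl α) * U (Sum.inl α) j)
        = if i ∈ Iᶜ then (if j ∈ J then A i j else 0) else 0 := by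
      simp only [hT, hU, Sum.elim_inl, ite_mul, one_mul, zero_mul]
      rw [Finset.sum_coe_sort (Iᶜ) (fun α => if i = α then (if j ∈ J then A α j else 0) else 0),
        Finset.sum_ite_eq]
    have h2 : (∑ β : ↥(Jᶜ), T i (Sum.inr β) * U (Sum.inr β) j)
        = if j ∈ Jᶜ then A i j else 0 := by
      simp only [hT, hU, Sum.elim_inr, mul_ite, mul_one, mul_zero]
      rw [Finset.sum_coe_sort (Jᶜ) (fun β => if j = β then A i β else 0),
        Finset.sum_ite_eq]
    rw [h1, h2]
    by_cases hj : j ∈ J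
    · simp only [hj, if_true, Finset.mem_compl, hj, not_true, if_false, add_zero]
      by_cases hi : i ∈ I
      · simp [Finset.mem_compl, hi, hzero i hi j hj]
      · simp [Finset.mem_compl, hi]
    · simp [Finset.mem_compl, hj]
end

section
/- Let D be a division ring with central subfield K, and let f, g ∈ D be given by admissible linear systems (e_1, A_f, v_f) of dimension n_f and (e_1, A_g, v_g) of dimension n_g, where A_f has the block form [[a, b', b],[a', B, b''],[0, 0, 1]] with bottom row e_{n_f} (i.e., last row [0,…,0,1]) and v_f = λ_f e_{n_f} for λ_f ∈ K. Then the (n_f + n_g − 1)-dimensional system with system matrix [[a, b', λ_f b u_g],[a', B, λ_f b'' u_g],[0, 0, A_g]] (where u_g = e_1 of size n_g), right-hand side [0; 0; v_g], and u = e_1 is an admissible linear system representing f·g, provided its system matrix is invertible; moreover its system matrix is invertible. -/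
/-- Multiplication of type (1,*): if `f` has an ALS `(e_1, A_f, λ_f e_{n_f})` of
dimension `n_f = k+1` whose last row is `e_{n_f}`, and `g` has an ALS
`(e_1, A_g, v_g)` of dimension `n_g`, then the system of dimension `n_f + n_g − 1`
with system matrix `[[a, b', λ_f b u_g],[a', B, λ_f b'' u_g],[0, 0, A_g]]` and
right-hand side `[0; 0; v_g]` is an admissible linear system for `f·g`; in particular
its system matrix is invertible. -/
theorem stmt11 {K D : Type*} [Field K] [DivisionRing D] [Algebra K D]
    {k ng : ℕ} [NeZero k] [NeZero ng]
    (Af : Matrix (Fin (k + 1)) (Fin (k + 1)) D)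
    (Bf : Matrix (Fin (k + 1)) (Fin (k + 1)) D)
    (hBf : Af * Bf = 1 ∧ Bf * Af = 1)
    (Ag Bg : Matrix (Fin ng) (Fin ng) D)
    (hBg : Ag * Bg = 1 ∧ Bg * Ag = 1)
    (lamf : K)
    (vf : Matrix (Fin (k + 1)) (Fin 1) D)
    (hvf : ∀ i, vf i 0 = if i = Fin.last k then algebraMap K D lamf else 0)
    (hAflast : ∀ j, Af (Fin.last k) j = if j = Fin.last k then (1 : D) else 0)
    (vg : Matrix (Fin ng) (Fin 1) D)
    (f g : D)
    (hf : f = (Bf * vf) 0 0) (hg : g = (Bg * vg) 0 0)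
    (C : Matrix (Fin k ⊕ Fin ng) (Fin k ⊕ Fin ng) D)
    (hC : C = Matrix.fromBlocks
      (Matrix.of fun i j : Fin k => Af i.castSucc j.castSucc)
      (Matrix.of fun (i : Fin k) (j : Fin ng) =>
        algebraMap K D lamf * Af i.castSucc (Fin.last k) *
          (if j = 0 then (1 : D) else 0))
      0 Ag)
    (w : Matrix (Fin k ⊕ Fin ng) (Fin 1) D)
    (hw : w = Matrix.of (Sum.elim (fun (_ : Fin k) (_ : Fin 1) => (0 : D))
      (fun i => vg i))) :
    ∃ C' : Matrix (Fin k ⊕ Fin ng) (Fin k ⊕ Fin ng) D,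
      C * C' = 1 ∧ C' * C = 1 ∧ (C' * w) (Sum.inl 0) 0 = f * g := by
  obtain ⟨hAB, hBA⟩ := hBf
  obtain ⟨hAgBg, hBgAg⟩ := hBg
  set L := algebraMap K D lamf with hL
  have hcom : ∀ a b c : D, a * (L * b * c) = L * (a * b) * c := by
    intro a b c
    rw [← mul_assoc, ← mul_assoc, ← Algebra.commutes lamf a, mul_assoc L a b]
  -- last row of Bf is e_last
  have hBflast : ∀ j, Bf (Fin.last k) j = if j = Fin.last k then (1 : D) else 0 := by
    intro j
    have h := congrFun (congrFun hAB (Fin.last k)) j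
    rw [Matrix.mul_apply] at h
    simp only [hAflast, ite_mul, one_mul, zero_mul,
      Finset.sum_ite_eq' Finset.univ, Finset.mem_univ, if_true] at h
    rw [h, Matrix.one_apply]
    by_cases hj : j = Fin.last k
    · simp [hj]
    · simp [hj, Ne.symm hj]
  have key1 : ∀ i j : Fin k,
      ∑ m : Fin k, Af i.castSucc m.castSucc * Bf m.castSucc j.castSucc
        = if i = j then (1 : D) else 0 := by
    intro i j
    have h := congrFun (congrFun hAB i.castSucc) j.castSucc
    rw [Matrix.mul_apply, Fin.sum_univ_castSucc, hBflast,
      if_neg (Fin.castSucc_lt_last j).ne, mul_zero, add_zero, Matrix.one_apply] at h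
    rw [h]
    simp [Fin.castSucc_inj]
  have key2 : ∀ i : Fin k,
      ∑ m : Fin k, Af i.castSucc m.castSucc * Bf m.castSucc (Fin.last k)
        = - Af i.castSucc (Fin.last k) := by
    intro i
    have h := congrFun (congrFun hAB i.castSucc) (Fin.last k)
    rw [Matrix.mul_apply, Fin.sum_univ_castSucc, hBflast, if_pos rfl, mul_one,
      Matrix.one_apply, if_neg (Fin.castSucc_lt_last i).ne] at h
    exact eq_neg_of_add_eq_zero_left h
  have key3 : ∀ i j : Fin k,
      ∑ m : Fin k, Bf i.castSucc m.castSucc * Af m.castSucc j.castSucc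
        = if i = j then (1 : D) else 0 := by
    intro i j
    have h := congrFun (congrFun hBA i.castSucc) j.castSucc
    rw [Matrix.mul_apply, Fin.sum_univ_castSucc, hAflast,
      if_neg (Fin.castSucc_lt_last j).ne, mul_zero, add_zero, Matrix.one_apply] at h
    rw [h]
    simp [Fin.castSucc_inj]
  have key4 : ∀ i : Fin k,
      ∑ m : Fin k, Bf i.castSucc m.castSucc * Af m.castSucc (Fin.last k)
        = - Bf i.castSucc (Fin.last k) := by
    intro i
    have h := congrFun (congrFun hBA i.castSucc) (Fin.last k)
    rw [Matrix.mul_apply, Fin.sum_univ_castSucc, hAflast, if_pos rfl, mul_one,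
      Matrix.one_apply, if_neg (Fin.castSucc_lt_last i).ne] at h
    exact eq_neg_of_add_eq_zero_left h
  -- the candidate inverse
  refine ⟨Matrix.fromBlocks
      (Matrix.of fun i j : Fin k => Bf i.castSucc j.castSucc)
      (Matrix.of fun (i : Fin k) (j : Fin ng) =>
        L * Bf i.castSucc (Fin.last k) * Bg 0 j)
      0 Bg, ?_, ?_, ?_⟩
  · -- C * C' = 1
    subst hC
    rw [Matrix.fromBlocks_multiply, ← Matrix.fromBlocks_one]
    have e1 : (Matrix.of fun i j : Fin k => Af i.castSucc j.castSucc) *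
        (Matrix.of fun i j : Fin k => Bf i.castSucc j.castSucc) = 1 := by
      ext i j
      rw [Matrix.mul_apply, Matrix.one_apply]
      simpa using key1 i j
    have e2 : (Matrix.of fun i j : Fin k => Af i.castSucc j.castSucc) *
        (Matrix.of fun (i : Fin k) (j : Fin ng) =>
          L * Bf i.castSucc (Fin.last k) * Bg 0 j) +
        (Matrix.of fun (i : Fin k) (j : Fin ng) =>
          L * Af i.castSucc (Fin.last k) * (if j = 0 then (1 : D) else 0)) * Bg = 0 := by
      ext i j
      simp only [Matrix.add_apply, Matrix.mul_apply, Matrix.of_apply, Matrix.zero_apply]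
      have S1 : ∑ m : Fin k, Af i.castSucc m.castSucc *
          (L * Bf m.castSucc (Fin.last k) * Bg 0 j)
          = L * (- Af i.castSucc (Fin.last k)) * Bg 0 j := by
        simp only [hcom]
        rw [← Finset.sum_mul, ← Finset.mul_sum, key2]
      have S2 : ∑ m : Fin ng, (L * Af i.castSucc (Fin.last k) *
          (if m = 0 then (1 : D) else 0)) * Bg m j
          = L * Af i.castSucc (Fin.last k) * Bg 0 j := by
        simp only [mul_ite, mul_one, mul_zero, ite_mul, zero_mul]
        rw [Finset.sum_ite_eq' Finset.univ]
        simp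
      rw [S1, S2]
      simp [mul_neg, neg_mul]
    rw [e1, e2, hAgBg]
    simp
  · -- C' * C = 1
    subst hC
    rw [Matrix.fromBlocks_multiply, ← Matrix.fromBlocks_one]
    have e3 : (Matrix.of fun i j : Fin k => Bf i.castSucc j.castSucc) *
        (Matrix.of fun i j : Fin k => Af i.castSucc j.castSucc) = 1 := by
      ext i j
      rw [Matrix.mul_apply, Matrix.one_apply]
      simpa using key3 i j
    have e4 : (Matrix.of fun i j : Fin k => Bf i.castSucc j.castSucc) *
        (Matrix.of fun (i : Fin k) (j : Fin ng) =>
          L * Af i.castSucc (Fin.last k) * (if j = 0 then (1 : D) else 0)) +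
        (Matrix.of fun (i : Fin k) (j : Fin ng) =>
          L * Bf i.castSucc (Fin.last k) * Bg 0 j) * Ag = 0 := by
      ext i j
      simp only [Matrix.add_apply, Matrix.mul_apply, Matrix.of_apply, Matrix.zero_apply]
      have S1 : ∑ m : Fin k, Bf i.castSucc m.castSucc *
          (L * Af m.castSucc (Fin.last k) * (if j = 0 then (1 : D) else 0))
          = L * (- Bf i.castSucc (Fin.last k)) * (if j = 0 then (1 : D) else 0) := by
        simp only [hcom]
        rw [← Finset.sum_mul, ← Finset.mul_sum, key4]
      have hg0 : ∑ m : Fin ng, Bg 0 m * Ag m j = if (0 : Fin ng) = j then (1 : D) else 0 := by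
        have h := congrFun (congrFun hBgAg 0) j
        rw [Matrix.mul_apply, Matrix.one_apply] at h
        exact h
      have S2 : ∑ m : Fin ng, (L * Bf i.castSucc (Fin.last k) * Bg 0 m) * Ag m j
          = L * Bf i.castSucc (Fin.last k) * (if (0 : Fin ng) = j then (1 : D) else 0) := by
        rw [Finset.sum_congr rfl fun m _ => mul_assoc _ _ _, ← Finset.mul_sum, hg0]
      rw [S1, S2]
      by_cases hj : j = 0
      · simp [hj, mul_neg, neg_mul]
      · simp [hj, Ne.symm hj]
    rw [e3, e4, hBgAg]
    simp
  · -- the value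
    subst hw
    rw [Matrix.mul_apply, Fintype.sum_sum_type]
    simp only [Matrix.fromBlocks_apply₁₁, Matrix.fromBlocks_apply₁₂, Matrix.of_apply,
      Sum.elim_inl, Sum.elim_inr, mul_zero, Finset.sum_const_zero, zero_add]
    have hfval : f = L * Bf (0 : Fin k).castSucc (Fin.last k) := by
      rw [hf, Matrix.mul_apply]
      simp only [hvf, mul_ite, mul_zero]
      rw [Finset.sum_ite_eq' Finset.univ]
      simp only [Finset.mem_univ, if_true]
      rw [← Algebra.commutes lamf, ← hL]
      simp
    have hgval : ∑ m : Fin ng, Bg 0 m * vg m 0 = g := by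
      rw [hg, Matrix.mul_apply]
    calc ∑ m : Fin ng, L * Bf (0 : Fin k).castSucc (Fin.last k) * Bg 0 m * vg m 0
        = L * Bf (0 : Fin k).castSucc (Fin.last k) * ∑ m : Fin ng, Bg 0 m * vg m 0 := by
          rw [Finset.mul_sum]
          exact Finset.sum_congr rfl fun m _ => by rw [mul_assoc]
      _ = f * g := by rw [hgval, hfval]
end

section
/- Let D be a division ring with central subfield K, let f, g ∈ D, and suppose g has an admissible linear system (e_1, A_g, v_g) of dimension n_g whose first column is e_1 (i.e., A_g = [[1, b', b],[0, B, b''],[0, c', c]]) with v_g = λ_g e_{n_g}, λ_g ∈ K, and f has an admissible linear system (e_1, A_f, v_f) with v_f = λ_f e_{n_f}, λ_f ∈ K. Then the system of dimension n_f + n_g − 1 with system matrix [[A_f, e_{n_f} λ_f b', e_{n_f} λ_f b],[0, B, b''],[0, c', c]], right-hand side [0; 0; λ_g], and u = [e_1 of size n_f, 0, 0] is an admissible linear system for f·g; in particular its system matrix is invertible. -/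
/-- Multiplication of type (*,1): if `g` has an ALS `(e_1, A_g, λ_g e_{n_g})` of
dimension `n_g = l+1` whose first column is `e_1`, and `f` has an ALS
`(e_1, A_f, λ_f e_{n_f})` of dimension `n_f = k+1`, then the system of dimension
`n_f + n_g − 1` with system matrix `[[A_f, e_{n_f} λ_f b', e_{n_f} λ_f b],[0, B, b''],
[0, c', c]]` and right-hand side `[0; …; 0; λ_g]` is an admissible linear system
for `f·g`; in particular its system matrix is invertible. -/
theorem stmt12 {K D : Type*} [Field K] [DivisionRing D] [Algebra K D]
    {k l : ℕ} [NeZero l]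
    (Af Bf : Matrix (Fin (k + 1)) (Fin (k + 1)) D)
    (hBf : Af * Bf = 1 ∧ Bf * Af = 1)
    (Ag Bg : Matrix (Fin (l + 1)) (Fin (l + 1)) D)
    (hBg : Ag * Bg = 1 ∧ Bg * Ag = 1)
    (lamf lamg : K)
    (vf : Matrix (Fin (k + 1)) (Fin 1) D)
    (hvf : ∀ i, vf i 0 = if i = Fin.last k then algebraMap K D lamf else 0)
    (vg : Matrix (Fin (l + 1)) (Fin 1) D)
    (hvg : ∀ i, vg i 0 = if i = Fin.last l then algebraMap K D lamg else 0)
    (hAgcol : ∀ i, Ag i 0 = if i = 0 then (1 : D) else 0)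
    (f g : D)
    (hf : f = (Bf * vf) 0 0) (hg : g = (Bg * vg) 0 0)
    (C : Matrix (Fin (k + 1) ⊕ Fin l) (Fin (k + 1) ⊕ Fin l) D)
    (hC : C = Matrix.fromBlocks
      Af
      (Matrix.of fun (i : Fin (k + 1)) (j : Fin l) =>
        if i = Fin.last k then algebraMap K D lamf * Ag 0 j.succ else 0)
      0
      (Matrix.of fun i j : Fin l => Ag i.succ j.succ))
    (w : Matrix (Fin (k + 1) ⊕ Fin l) (Fin 1) D)
    (hw : w = Matrix.of (Sum.elim (fun (_ : Fin (k + 1)) (_ : Fin 1) => (0 : D))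
      (fun i => vg i.succ))) :
    ∃ C' : Matrix (Fin (k + 1) ⊕ Fin l) (Fin (k + 1) ⊕ Fin l) D,
      C * C' = 1 ∧ C' * C = 1 ∧ (C' * w) (Sum.inl 0) 0 = f * g := by
  set A22 : Matrix (Fin l) (Fin l) D := Matrix.of fun i j => Ag i.succ j.succ with hA22
  set B22 : Matrix (Fin l) (Fin l) D := Matrix.of fun i j => Bg i.succ j.succ with hB22
  set X : Matrix (Fin (k+1)) (Fin l) D := Matrix.of fun (i : Fin (k + 1)) (j : Fin l) =>
        if i = Fin.last k then algebraMap K D lamf * Ag 0 j.succ else 0 with hXdef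
  have hBgcol : ∀ i, Bg i 0 = if i = 0 then (1:D) else 0 := by
    intro i
    have h1 := congrFun (congrFun hBg.2 i) 0
    rw [Matrix.mul_apply] at h1
    simpa [hAgcol, mul_ite, mul_one, mul_zero, Matrix.one_apply] using h1
  have hA22B22 : A22 * B22 = 1 := by
    ext i j
    have h1 := congrFun (congrFun hBg.1 i.succ) j.succ
    rw [Matrix.mul_apply, Fin.sum_univ_succ] at h1
    simp only [hAgcol, Fin.succ_ne_zero, if_neg, zero_mul, zero_add,
      Matrix.one_apply, Fin.succ_inj] at h1
    simpa [Matrix.mul_apply, Matrix.one_apply, hA22, hB22] using h1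
  have hB22A22 : B22 * A22 = 1 := by
    ext i j
    have h1 := congrFun (congrFun hBg.2 i.succ) j.succ
    rw [Matrix.mul_apply, Fin.sum_univ_succ] at h1
    simp only [hBgcol, hAgcol, Fin.succ_ne_zero, if_neg, zero_mul, mul_zero, zero_add,
      Matrix.one_apply, Fin.succ_inj] at h1
    simpa [Matrix.mul_apply, Matrix.one_apply, hA22, hB22] using h1
  have hBg0 : ∀ j : Fin l, Bg 0 j.succ = -∑ i : Fin l, Ag 0 i.succ * Bg i.succ j.succ := by
    intro j
    have h1 := congrFun (congrFun hBg.1 0) j.succ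
    rw [Matrix.mul_apply, Fin.sum_univ_succ] at h1
    simp only [hAgcol, if_pos rfl, one_mul, if_true, Matrix.one_apply,
      (Fin.succ_ne_zero j).symm, if_neg, if_false] at h1
    exact eq_neg_of_add_eq_zero_left h1
  have h0last : (0 : Fin (l+1)) ≠ Fin.last l := by
    have := NeZero.ne l
    simp [Fin.ext_iff]
    omega
  have hfval : f = Bf 0 (Fin.last k) * algebraMap K D lamf := by
    rw [hf, Matrix.mul_apply]
    simp [hvf, mul_ite, mul_zero, Finset.sum_ite_eq']
  have hgval : g = ∑ j : Fin l, Bg 0 j.succ * vg j.succ 0 := by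
    rw [hg, Matrix.mul_apply, Fin.sum_univ_succ, hvg 0, if_neg h0last, mul_zero, zero_add]
  refine ⟨Matrix.fromBlocks Bf (-(Bf * X * B22)) 0 B22, ?_, ?_, ?_⟩
  · rw [hC, Matrix.fromBlocks_multiply]
    rw [← Matrix.fromBlocks_one (l := Fin (k+1)) (m := Fin l) (α := D)]
    simp [hBf.1, hA22B22, ← Matrix.mul_assoc]
  · rw [hC, Matrix.fromBlocks_multiply]
    have hmid : Bf * X * B22 * A22 = Bf * X := by
      rw [Matrix.mul_assoc (Bf * X), hB22A22, Matrix.mul_one]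
    rw [← Matrix.fromBlocks_one (l := Fin (k+1)) (m := Fin l) (α := D)]
    simp [hBf.2, hB22A22, Matrix.mul_assoc, hmid]
  · rw [hw, Matrix.mul_apply, Fintype.sum_sum_type]
    simp only [Matrix.fromBlocks_apply₁₁, Matrix.fromBlocks_apply₁₂, Matrix.of_apply,
      Sum.elim_inl, Sum.elim_inr, mul_zero, Finset.sum_const_zero, zero_add]
    have hBfX : ∀ j : Fin l, (Bf * X * B22) 0 j = -(f * Bg 0 j.succ) := by
      intro j
      rw [Matrix.mul_apply]
      have h2 : ∀ i : Fin l, (Bf * X) 0 i =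
          Bf 0 (Fin.last k) * (algebraMap K D lamf * Ag 0 i.succ) := by
        intro i
        rw [Matrix.mul_apply]
        simp [hXdef, mul_ite, mul_zero, Finset.sum_ite_eq']
      calc ∑ i : Fin l, (Bf * X) 0 i * B22 i j
          = f * ∑ i : Fin l, Ag 0 i.succ * Bg i.succ j.succ := by
            rw [Finset.mul_sum]
            refine Finset.sum_congr rfl fun i _ => ?_
            rw [h2 i, hfval, hB22]
            simp [mul_assoc]
        _ = -(f * Bg 0 j.succ) := by rw [hBg0 j, mul_neg, neg_neg]
    calc ∑ j : Fin l, (-(Bf * X * B22)) 0 j * vg j.succ 0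
        = ∑ j : Fin l, f * (Bg 0 j.succ * vg j.succ 0) := by
          refine Finset.sum_congr rfl fun j _ => ?_
          rw [Matrix.neg_apply, hBfX j, neg_neg, mul_assoc]
      _ = f * g := by rw [← Finset.mul_sum, hgval]
end

section
/- Let D be a division ring with central subfield K. Suppose f ∈ D has an admissible linear system (e_1, A, v) of dimension n ≥ 2 with A = [[1, b', b],[0, B, b''],[0, 0, 1]] (first diagonal entry 1 and zero first column below it; last row e_n) and v = λ e_n with λ ∈ K, λ ≠ 0, and suppose f ≠ 0. Then the (n−1)×(n−1) matrix A' = [[−λ Σ b'', −Σ B Σ],[−λ b, −b' Σ]] is invertible over D and e_1 (A')⁻¹ e_{n−1} = f⁻¹, where Σ is the permutation matrix reversing the order of rows/columns (of size n−2). -/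
/-- Minimal inverse, type (1,1): if `f ≠ 0` is represented by an ALS of dimension
`n = m+2` with system matrix `A = [[1, b', b],[0, B, b''],[0, 0, 1]]` and right-hand
side `λ e_n` (`λ ∈ K`, `λ ≠ 0`), then the `(n−1)×(n−1)` matrix
`A' = [[−λ Σ b'', −Σ B Σ],[−λ b, −b' Σ]]` is invertible and
`e_1 (A')⁻¹ e_{n−1} = f⁻¹` (where `Σ` reverses the order of rows/columns). -/
theorem stmt14 {K D : Type*} [Field K] [DivisionRing D] [Algebra K D] {m : ℕ}
    (b' : Fin m → D) (b : D) (B : Matrix (Fin m) (Fin m) D) (b'' : Fin m → D)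
    (A Ainv : Matrix (Fin 1 ⊕ Fin m ⊕ Fin 1) (Fin 1 ⊕ Fin m ⊕ Fin 1) D)
    (hAdef : A = Matrix.of fun i j : Fin 1 ⊕ Fin m ⊕ Fin 1 =>
      match i, j with
      | .inl _, .inl _ => (1 : D)
      | .inl _, .inr (.inl j) => b' j
      | .inl _, .inr (.inr _) => b
      | .inr (.inl _), .inl _ => 0
      | .inr (.inl i), .inr (.inl j) => B i j
      | .inr (.inl i), .inr (.inr _) => b'' i
      | .inr (.inr _), .inl _ => 0
      | .inr (.inr _), .inr (.inl _) => 0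
      | .inr (.inr _), .inr (.inr _) => 1)
    (hA : A * Ainv = 1 ∧ Ainv * A = 1)
    (lam : K) (hlam : lam ≠ 0)
    (v : Matrix (Fin 1 ⊕ Fin m ⊕ Fin 1) (Fin 1) D)
    (hv : ∀ i, v i 0 = if i = Sum.inr (Sum.inr 0) then algebraMap K D lam else 0)
    (f : D) (hf : f = (Ainv * v) (Sum.inl 0) 0) (hf0 : f ≠ 0)
    (A' : Matrix (Fin m ⊕ Fin 1) (Fin 1 ⊕ Fin m) D)
    (hA' : A' = Matrix.of fun i j =>
      match i, j with
      | .inl i, .inl _ => -(algebraMap K D lam * b'' i.rev)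
      | .inl i, .inr j => -(B i.rev j.rev)
      | .inr _, .inl _ => -(algebraMap K D lam * b)
      | .inr _, .inr j => -(b' j.rev)) :
    ∃ C : Matrix (Fin 1 ⊕ Fin m) (Fin m ⊕ Fin 1) D,
      A' * C = 1 ∧ C * A' = 1 ∧ C (Sum.inl 0) (Sum.inr 0) = f⁻¹ := by
  obtain ⟨hA1, hA2⟩ := hA
  subst hAdef
  set lD := algebraMap K D lam with hlDdef
  set α := Ainv (Sum.inl 0) (Sum.inr (Sum.inr 0)) with hα
  set β : Fin m → D := fun j => Ainv (Sum.inl 0) (Sum.inr (Sum.inl j)) with hβ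
  set γ : Fin m → D := fun i => Ainv (Sum.inr (Sum.inl i)) (Sum.inr (Sum.inr 0)) with hγ
  set Bi : Matrix (Fin m) (Fin m) D := fun i j => Ainv (Sum.inr (Sum.inl i)) (Sum.inr (Sum.inl j)) with hBi
  have hrev : ∀ (g : Fin m → D), ∑ k, g (Fin.rev k) = ∑ k, g k := fun g =>
    Fintype.sum_bijective Fin.rev Fin.rev_bijective _ _ (fun _ => rfl)
  -- first column of Ainv
  have hcol : ∀ p, Ainv p (Sum.inl 0) = if p = Sum.inl 0 then 1 else 0 := by
    intro p
    have h := congrFun (congrFun hA2 p) (Sum.inl 0)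
    simpa [Matrix.mul_apply, Fintype.sum_sum_type, Matrix.one_apply] using h
  have h11 : Ainv (Sum.inl 0) (Sum.inl 0) = 1 := by simp [hcol]
  have h01 : ∀ i, Ainv (Sum.inr (Sum.inl i)) (Sum.inl 0) = 0 := by simp [hcol]
  -- last row of Ainv
  have hrow : ∀ q, Ainv (Sum.inr (Sum.inr 0)) q = if Sum.inr (Sum.inr 0) = q then 1 else 0 := by
    intro q
    have h := congrFun (congrFun hA1 (Sum.inr (Sum.inr 0))) q
    simpa [Matrix.mul_apply, Fintype.sum_sum_type, Matrix.one_apply] using h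
  have hr1 : ∀ j, Ainv (Sum.inr (Sum.inr 0)) (Sum.inr (Sum.inl j)) = 0 := by simp [hrow]
  have hr2 : Ainv (Sum.inr (Sum.inr 0)) (Sum.inr (Sum.inr 0)) = 1 := by simp [hrow]
  -- relations from Ainv * A = 1
  have R2 : ∀ j, b' j + ∑ k, β k * B k j = 0 := by
    intro j
    have h := congrFun (congrFun hA2 (Sum.inl 0)) (Sum.inr (Sum.inl j))
    simpa [Matrix.mul_apply, Fintype.sum_sum_type, Matrix.one_apply, h11] using h
  have R3 : b + (∑ k, β k * b'' k + α) = 0 := by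
    have h := congrFun (congrFun hA2 (Sum.inl 0)) (Sum.inr (Sum.inr 0))
    simpa [Matrix.mul_apply, Fintype.sum_sum_type, Matrix.one_apply, h11] using h
  have R5 : ∀ i j, ∑ k, Bi i k * B k j = if i = j then (1:D) else 0 := by
    intro i j
    have h := congrFun (congrFun hA2 (Sum.inr (Sum.inl i))) (Sum.inr (Sum.inl j))
    simpa [Matrix.mul_apply, Fintype.sum_sum_type, Matrix.one_apply, h01] using h
  have R6 : ∀ i, ∑ k, Bi i k * b'' k + γ i = 0 := by
    intro i
    have h := congrFun (congrFun hA2 (Sum.inr (Sum.inl i))) (Sum.inr (Sum.inr 0))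
    simpa [Matrix.mul_apply, Fintype.sum_sum_type, Matrix.one_apply, h01] using h
  -- relations from A * Ainv = 1
  have R8 : ∀ i j, ∑ k, B i k * Bi k j = if i = j then (1:D) else 0 := by
    intro i j
    have h := congrFun (congrFun hA1 (Sum.inr (Sum.inl i))) (Sum.inr (Sum.inl j))
    simpa [Matrix.mul_apply, Fintype.sum_sum_type, Matrix.one_apply, hr1] using h
  have R9 : ∀ i, ∑ k, B i k * γ k + b'' i = 0 := by
    intro i
    have h := congrFun (congrFun hA1 (Sum.inr (Sum.inl i))) (Sum.inr (Sum.inr 0))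
    simpa [Matrix.mul_apply, Fintype.sum_sum_type, Matrix.one_apply, hr2] using h
  have R10 : α + (∑ k, b' k * γ k + b) = 0 := by
    have h := congrFun (congrFun hA1 (Sum.inl 0)) (Sum.inr (Sum.inr 0))
    simpa [Matrix.mul_apply, Fintype.sum_sum_type, Matrix.one_apply, hr2] using h
  have R11 : ∀ j, β j + ∑ k, b' k * Bi k j = 0 := by
    intro j
    have h := congrFun (congrFun hA1 (Sum.inl 0)) (Sum.inr (Sum.inl j))
    simpa [Matrix.mul_apply, Fintype.sum_sum_type, Matrix.one_apply, hr1] using h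
  -- value of f
  have hfval : f = α * lD := by
    rw [hf]
    simp [Matrix.mul_apply, Fintype.sum_sum_type, hv]
    exact Or.inl rfl
  -- rearranged forms
  have R2' : ∀ j, ∑ k, β k * B k j = -b' j := fun j => eq_neg_of_add_eq_zero_right (R2 j)
  have R3' : ∑ k, β k * b'' k = -b - α :=
    eq_sub_of_add_eq (eq_neg_of_add_eq_zero_right R3)
  have R6' : ∀ i, ∑ k, Bi i k * b'' k = -γ i := fun i => eq_neg_of_add_eq_zero_left (R6 i)
  have R9' : ∀ i, ∑ k, B i k * γ k = -b'' i := fun i => eq_neg_of_add_eq_zero_left (R9 i)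
  have R10' : ∑ k, b' k * γ k = -α - b :=
    eq_sub_of_add_eq (eq_neg_of_add_eq_zero_right R10)
  have R11' : ∀ j, ∑ k, b' k * Bi k j = -β j := fun j => eq_neg_of_add_eq_zero_right (R11 j)
  -- centrality helpers
  have hc : ∀ x : D, lD * x = x * lD := fun x => Algebra.commutes lam x
  have hci : ∀ x : D, lD⁻¹ * x = x * lD⁻¹ := fun x => (Commute.inv_left₀ (hc x) : _)
  have hlDne : lD ≠ 0 := fun h =>
    hlam ((algebraMap K D).injective (by rw [map_zero]; exact h))
  have hαne : α ≠ 0 := fun h => hf0 (by rw [hfval, h, zero_mul])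
  have hfinv : f⁻¹ = α⁻¹ * lD⁻¹ := by rw [hfval, mul_inv_rev, hci]
  have hcent : ∀ x y z : D, (lD * x) * (y * lD⁻¹ * z) = x * (y * z) := by
    intro x y z
    rw [hc x, mul_assoc x, ← hci y, mul_assoc lD⁻¹, mul_inv_cancel_left₀ hlDne]
  have hcent3 : ∀ x y z : D, (y * lD⁻¹ * x) * (lD * z) = y * (x * z) := by
    intro x y z
    rw [mul_assoc (y * lD⁻¹), ← mul_assoc x lD, ← hc x, mul_assoc lD, mul_assoc y,
      inv_mul_cancel_left₀ hlDne]
  have hx1 : ∀ x y : D, -(lD * x) * (α⁻¹ * lD⁻¹ * y) = -(x * (α⁻¹ * y)) := by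
    intro x y; rw [neg_mul, hcent]
  have hx2 : ∀ x : D, -(lD * x) * (α⁻¹ * lD⁻¹) = -(x * α⁻¹) := by
    intro x
    have := hx1 x 1
    simpa using this
  have hx3 : ∀ x y : D, (α⁻¹ * lD⁻¹ * x) * -(lD * y) = -(α⁻¹ * (x * y)) := by
    intro x y; rw [mul_neg, hcent3]
  have hx4 : ∀ y : D, (α⁻¹ * lD⁻¹) * -(lD * y) = -(α⁻¹ * y) := by
    intro y; rw [mul_neg, mul_assoc, inv_mul_cancel_left₀ hlDne]
  have hx5 : ∀ x y : D, x * -(lD * y) = -(lD * (x * y)) := by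
    intro x y; rw [mul_neg, ← mul_assoc, ← hc, mul_assoc]
  refine ⟨Matrix.of fun i j =>
    match i, j with
    | .inl _, .inl j => α⁻¹ * lD⁻¹ * β (Fin.rev j)
    | .inl _, .inr _ => α⁻¹ * lD⁻¹
    | .inr i, .inl j => -Bi (Fin.rev i) (Fin.rev j) + γ (Fin.rev i) * α⁻¹ * β (Fin.rev j)
    | .inr i, .inr _ => γ (Fin.rev i) * α⁻¹, ?_, ?_, ?_⟩
  · ext p q
    rcases p with i | i <;> rcases q with j | j
    · -- (inl i, inl j)
      simp only [Matrix.mul_apply, Fintype.sum_sum_type, hA', Matrix.of_apply,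
        Matrix.one_apply, Finset.univ_unique, Finset.sum_singleton, Sum.inl.injEq]
      rw [hrev (fun k => -B i.rev k * (-Bi k j.rev + γ k * α⁻¹ * β j.rev))]
      have hs : ∑ k, -B i.rev k * (-Bi k j.rev + γ k * α⁻¹ * β j.rev)
          = (if i.rev = j.rev then (1:D) else 0) - (∑ k, B i.rev k * γ k) * (α⁻¹ * β j.rev) := by
        rw [← R8, Finset.sum_mul, ← Finset.sum_sub_distrib]
        exact Finset.sum_congr rfl fun k _ => by noncomm_ring
      rw [hs, R9' i.rev, hx1]
      simp only [Fin.rev_inj, neg_mul, sub_neg_eq_add]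
      abel
    · -- (inl i, inr j)
      have hj : j = 0 := Subsingleton.elim _ _
      subst hj
      simp only [Matrix.mul_apply, Fintype.sum_sum_type, hA', Matrix.of_apply,
        Matrix.one_apply, Finset.univ_unique, Finset.sum_singleton, reduceCtorEq, if_false]
      rw [hrev (fun k => -B i.rev k * (γ k * α⁻¹))]
      have hs : ∑ k, -B i.rev k * (γ k * α⁻¹)
          = -((∑ k, B i.rev k * γ k) * α⁻¹) := by
        rw [Finset.sum_mul, ← Finset.sum_neg_distrib]
        exact Finset.sum_congr rfl fun k _ => by noncomm_ring
      rw [hs, R9' i.rev, hx2]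
      rw [neg_mul, neg_neg]
      abel
    · -- (inr i, inl j)
      simp only [Matrix.mul_apply, Fintype.sum_sum_type, hA', Matrix.of_apply,
        Matrix.one_apply, Finset.univ_unique, Finset.sum_singleton, reduceCtorEq, if_false]
      rw [hrev (fun k => -b' k * (-Bi k j.rev + γ k * α⁻¹ * β j.rev))]
      have hs : ∑ k, -b' k * (-Bi k j.rev + γ k * α⁻¹ * β j.rev)
          = (∑ k, b' k * Bi k j.rev) - (∑ k, b' k * γ k) * (α⁻¹ * β j.rev) := by
        rw [Finset.sum_mul, ← Finset.sum_sub_distrib]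
        exact Finset.sum_congr rfl fun k _ => by noncomm_ring
      rw [hs, R11' j.rev, R10', hx1]
      rw [sub_mul, neg_mul, mul_inv_cancel_left₀ hαne]
      abel
    · -- (inr i, inr j)
      have hi : i = 0 := Subsingleton.elim _ _
      have hj : j = 0 := Subsingleton.elim _ _
      subst hi; subst hj
      simp only [Matrix.mul_apply, Fintype.sum_sum_type, hA', Matrix.of_apply,
        Matrix.one_apply, Finset.univ_unique, Finset.sum_singleton, if_pos rfl]
      rw [hrev (fun k => -b' k * (γ k * α⁻¹))]
      have hs : ∑ k, -b' k * (γ k * α⁻¹) = -((∑ k, b' k * γ k) * α⁻¹) := by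
        rw [Finset.sum_mul, ← Finset.sum_neg_distrib]
        exact Finset.sum_congr rfl fun k _ => by noncomm_ring
      rw [hs, R10', hx2]
      rw [sub_mul, neg_mul, mul_inv_cancel₀ hαne]
      abel
  · ext p q
    rcases p with i | i <;> rcases q with j | j
    · -- (inl i, inl j), both Fin 1
      have hi : i = 0 := Subsingleton.elim _ _
      have hj : j = 0 := Subsingleton.elim _ _
      subst hi; subst hj
      simp only [Matrix.mul_apply, Fintype.sum_sum_type, hA', Matrix.of_apply,
        Matrix.one_apply, Finset.univ_unique, Finset.sum_singleton, if_pos rfl]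
      rw [hrev (fun k => (α⁻¹ * lD⁻¹ * β k) * -(lD * b'' k))]
      have hs : ∑ k, (α⁻¹ * lD⁻¹ * β k) * -(lD * b'' k)
          = -(α⁻¹ * (∑ k, β k * b'' k)) := by
        rw [Finset.mul_sum, ← Finset.sum_neg_distrib]
        exact Finset.sum_congr rfl fun k _ => hx3 (β k) (b'' k)
      rw [hs, R3', hx4]
      rw [mul_sub, mul_neg, inv_mul_cancel₀ hαne, if_pos trivial]
      abel
    · -- (inl i, inr j)
      simp only [Matrix.mul_apply, Fintype.sum_sum_type, hA', Matrix.of_apply,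
        Matrix.one_apply, Finset.univ_unique, Finset.sum_singleton, reduceCtorEq, if_false]
      rw [hrev (fun k => (α⁻¹ * lD⁻¹ * β k) * -B k j.rev)]
      have hs : ∑ k, (α⁻¹ * lD⁻¹ * β k) * -B k j.rev
          = -(α⁻¹ * lD⁻¹ * (∑ k, β k * B k j.rev)) := by
        rw [Finset.mul_sum, ← Finset.sum_neg_distrib]
        exact Finset.sum_congr rfl fun k _ => by noncomm_ring
      rw [hs, R2' j.rev]
      simp only [mul_neg, neg_neg]
      abel
    · -- (inr i, inl j)
      simp only [Matrix.mul_apply, Fintype.sum_sum_type, hA', Matrix.of_apply,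
        Matrix.one_apply, Finset.univ_unique, Finset.sum_singleton, reduceCtorEq, if_false]
      rw [hrev (fun k => (-Bi i.rev k + γ i.rev * α⁻¹ * β k) * -(lD * b'' k))]
      have hs : ∑ k, (-Bi i.rev k + γ i.rev * α⁻¹ * β k) * -(lD * b'' k)
          = -(lD * (∑ k, (-Bi i.rev k + γ i.rev * α⁻¹ * β k) * b'' k)) := by
        rw [Finset.mul_sum, ← Finset.sum_neg_distrib]
        exact Finset.sum_congr rfl fun k _ => hx5 _ (b'' k)
      rw [hs]
      have hs2 : ∑ k, (-Bi i.rev k + γ i.rev * α⁻¹ * β k) * b'' k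
          = -(∑ k, Bi i.rev k * b'' k) + γ i.rev * α⁻¹ * (∑ k, β k * b'' k) := by
        rw [Finset.mul_sum, ← Finset.sum_neg_distrib, ← Finset.sum_add_distrib]
        exact Finset.sum_congr rfl fun k _ => by noncomm_ring
      rw [hs2, R6' i.rev, R3', neg_neg, hx5]
      have h1 : γ i.rev * α⁻¹ * (-b - α) = -(γ i.rev * α⁻¹ * b) - γ i.rev := by
        rw [mul_sub, mul_neg, inv_mul_cancel_right₀ hαne]
      rw [h1]
      simp only [mul_add, mul_sub, mul_neg]
      abel
    · -- (inr i, inr j)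
      simp only [Matrix.mul_apply, Fintype.sum_sum_type, hA', Matrix.of_apply,
        Matrix.one_apply, Finset.univ_unique, Finset.sum_singleton, Sum.inr.injEq]
      rw [hrev (fun k => (-Bi i.rev k + γ i.rev * α⁻¹ * β k) * -B k j.rev)]
      have hs : ∑ k, (-Bi i.rev k + γ i.rev * α⁻¹ * β k) * -B k j.rev
          = (∑ k, Bi i.rev k * B k j.rev) - γ i.rev * α⁻¹ * (∑ k, β k * B k j.rev) := by
        rw [Finset.mul_sum, ← Finset.sum_sub_distrib]
        exact Finset.sum_congr rfl fun k _ => by noncomm_ring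
      rw [hs, R5 i.rev j.rev, R2' j.rev]
      simp only [Fin.rev_inj, mul_neg, sub_neg_eq_add]
      abel
  · simp [hfinv]
end
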